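/- For every c ∈ (0, π) and every x ∈ (0, c): 3/8 ≤ (1 - cos x / cos(x/2)) / x² ≤ (1 - cos c / cos(c/2)) / c². -/

import Mathlib

open Real Set

lemma deriv_mono_aux {f f' : ℝ → ℝ} (hd : ∀ s, HasDerivAt f (f' s) s)
    (hc : Continuous f) (h0 : ∀ s, 0 ≤ s → 0 ≤ f' s) {t : ℝ} (ht : 0 ≤ t) :
    f 0 ≤ f t := by
  have mono : MonotoneOn f (Ici 0) := by
    apply monotoneOn_of_deriv_nonneg (convex_Ici 0) hc.continuousOn
    · intro s hs; exact (hd s).differentiableAt.differentiableWithinAt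
    · intro s hs
      rw [(hd s).deriv]
      exact h0 s (le_of_lt (by simpa using hs))
  exact mono self_mem_Ici (mem_Ici.2 ht) ht

lemma sin_ge_cubic {t : ℝ} (ht : 0 ≤ t) : t - t ^ 3 / 6 ≤ Real.sin t := by
  have := deriv_mono_aux (f := fun u => Real.sin u - (u - u ^ 3 / 6))
    (f' := fun s => Real.cos s - (1 - 3 * s ^ 2 / 6))
    (fun s => (Real.hasDerivAt_sin s).sub (((hasDerivAt_id s).sub
        (((hasDerivAt_pow 3 s).div_const 6)))))
    (Real.continuous_sin.sub (by continuity))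
    (fun s _ => by nlinarith [Real.one_sub_sq_div_two_le_cos (x := s)]) ht
  simp at this; linarith

lemma cos_le_quartic {t : ℝ} (ht : 0 ≤ t) : Real.cos t ≤ 1 - t ^ 2 / 2 + t ^ 4 / 24 := by
  have := deriv_mono_aux (f := fun u => 1 - u ^ 2 / 2 + u ^ 4 / 24 - Real.cos u)
    (f' := fun s => (0 - 2 * s ^ 1 / 2 + 4 * s ^ 3 / 24) - (-Real.sin s))
    (fun s => ((((hasDerivAt_const s (1:ℝ)).sub ((hasDerivAt_pow 2 s).div_const 2)).add
      ((hasDerivAt_pow 4 s).div_const 24)).sub (Real.hasDerivAt_cos s)))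
    (by continuity)
    (fun s hs => by have := sin_ge_cubic hs; simp; nlinarith) ht
  simp at this; linarith

lemma quad_mono {a b : ℝ} (h0 : 0 ≤ a) (h : a ≤ b) : 2 * a * (2 * a + 1) ≤ 2 * b * (2 * b + 1) := by
  nlinarith

lemma poly_aux {t : ℝ} (h0 : 0 ≤ t) (h1 : t ≤ 1) :
    2 * (1 - t ^ 2 / 2 + t ^ 4 / 24) * (2 * (1 - t ^ 2 / 2 + t ^ 4 / 24) + 1) * (t ^ 2 / 2)
      ≤ (t ^ 2 - t ^ 4 / 6) * (2 * (1 - t ^ 2 / 2) ^ 2 + 1) := by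
  nlinarith [pow_nonneg h0 6, pow_le_one₀ h0 h1 (n := 4), pow_nonneg h0 4, pow_nonneg h0 2]

lemma key_ineq {t : ℝ} (ht0 : 0 < t) (ht2 : t < π / 2) :
    2 * Real.cos t * (2 * Real.cos t + 1) * (1 - Real.cos t) ≤
      t * Real.sin t * (2 * Real.cos t ^ 2 + 1) := by
  set s := Real.sin t with hs
  set c := Real.cos t with hc
  have hc0 : 0 < c := Real.cos_pos_of_mem_Ioo ⟨by linarith [pi_pos], ht2⟩
  have hs0 : 0 < s := Real.sin_pos_of_pos_of_lt_pi ht0 (by linarith [pi_pos, pi_gt_three])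
  have hpyth : s ^ 2 + c ^ 2 = 1 := Real.sin_sq_add_cos_sq t
  have hslt : s ≤ t := le_of_lt (Real.sin_lt ht0)
  have hsge : t - t ^ 3 / 6 ≤ s := sin_ge_cubic ht0.le
  have hcge : 1 - t ^ 2 / 2 ≤ c := Real.one_sub_sq_div_two_le_cos
  have hcle : c ≤ 1 - t ^ 2 / 2 + t ^ 4 / 24 := cos_le_quartic ht0.le
  have hc1 : c ≤ 1 := Real.cos_le_one t
  have hpi : π < 3.15 := by linarith [pi_lt_d2]
  have htpi : t < 1.575 := by linarith
  rcases le_total (2 * c ^ 2) 1 with h | h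
  · nlinarith [mul_pos hs0 hs0, mul_nonneg (sub_nonneg.2 hslt) hs0.le,
      mul_nonneg (mul_nonneg (sub_nonneg.2 hslt) hs0.le) hc0.le, sq_nonneg (1 - c), sq_nonneg s]
  · have ht1 : t ≤ 1 := by
      by_contra hgt
      push_neg at hgt
      have hcs : 7/10 ≤ c := by nlinarith
      nlinarith
    have hmin : (0:ℝ) ≤ 1 - t ^ 2 / 2 := by nlinarith
    have h1 : (t ^ 2 - t ^ 4 / 6) * (2 * (1 - t ^ 2 / 2) ^ 2 + 1) ≤ t * s * (2 * c ^ 2 + 1) := by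
      have p1 : t ^ 2 - t ^ 4 / 6 ≤ t * s := by nlinarith
      have p2 : 2 * (1 - t ^ 2 / 2) ^ 2 + 1 ≤ 2 * c ^ 2 + 1 := by
        have := mul_self_le_mul_self hmin hcge
        nlinarith
      exact mul_le_mul p1 p2 (by positivity) (mul_pos ht0 hs0).le
    have h2 : 2 * c * (2 * c + 1) * (1 - c) ≤
        2 * (1 - t ^ 2 / 2 + t ^ 4 / 24) * (2 * (1 - t ^ 2 / 2 + t ^ 4 / 24) + 1) * (t ^ 2 / 2) := by
      have q1 : 1 - c ≤ t ^ 2 / 2 := by linarith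
      have q2 := quad_mono hc0.le hcle
      exact mul_le_mul q2 q1 (by linarith) (by positivity)
    linarith [poly_aux ht0.le ht1]

lemma low_ineq {t : ℝ} (ht0 : 0 < t) (ht2 : t < π / 2) :
    3 / 2 * t ^ 2 * Real.cos t ≤ (1 - Real.cos t) * (2 * Real.cos t + 1) := by
  set c := Real.cos t with hc
  have hcge : 1 - t ^ 2 / 2 ≤ c := Real.one_sub_sq_div_two_le_cos
  have hcle : c ≤ 1 - t ^ 2 / 2 + t ^ 4 / 24 := cos_le_quartic ht0.le
  have hpi : π < 3.15 := by linarith [pi_lt_d2]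
  have htpi : t < 1.575 := by linarith
  have ht6 : t ^ 2 ≤ 5 / 2 := by nlinarith
  have a1 : t ^ 2 / 2 - t ^ 4 / 24 ≤ 1 - c := by linarith
  have a2 : 3 - t ^ 2 ≤ 2 * c + 1 := by linarith
  have a3 : (0:ℝ) ≤ t ^ 2 / 2 - t ^ 4 / 24 := by nlinarith
  have a4 : (0:ℝ) ≤ 3 - t ^ 2 := by linarith
  have key : (t ^ 2 / 2 - t ^ 4 / 24) * (3 - t ^ 2) ≤ (1 - c) * (2 * c + 1) :=
    mul_le_mul a1 a2 a4 (by linarith)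
  have rhs : 3 / 2 * t ^ 2 * c ≤ 3 / 2 * t ^ 2 * (1 - t ^ 2 / 2 + t ^ 4 / 24) := by nlinarith
  have poly : 3 / 2 * t ^ 2 * (1 - t ^ 2 / 2 + t ^ 4 / 24) ≤
      (t ^ 2 / 2 - t ^ 4 / 24) * (3 - t ^ 2) := by nlinarith [pow_nonneg ht0.le 4]
  linarith

lemma sandor_deriv {y : ℝ} (hy : y ∈ Ioo 0 π) :
    HasDerivAt (fun z => (1 - Real.cos z / Real.cos (z / 2)) / z ^ 2)
      ((y * (y / 2 * Real.sin (y / 2) * (2 * Real.cos (y / 2) ^ 2 + 1)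
          - 2 * Real.cos (y / 2) * (2 * Real.cos (y / 2) + 1) * (1 - Real.cos (y / 2))))
        / (Real.cos (y / 2) ^ 2 * (y ^ 2) ^ 2)) y := by
  obtain ⟨hy0, hy1⟩ := hy
  have hcy : 0 < Real.cos (y / 2) :=
    Real.cos_pos_of_mem_Ioo ⟨by linarith [pi_pos], by linarith⟩
  have hB : HasDerivAt (fun z : ℝ => Real.cos (z / 2)) (-Real.sin (y / 2) * (1 / 2)) y :=
    by have := (Real.hasDerivAt_cos (y / 2)).comp y ((hasDerivAt_id y).div_const 2); exact this
  have hA : HasDerivAt (fun z => Real.cos z / Real.cos (z / 2))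
      ((-Real.sin y * Real.cos (y / 2) - Real.cos y * (-Real.sin (y / 2) * (1 / 2)))
        / Real.cos (y / 2) ^ 2) y :=
    (Real.hasDerivAt_cos y).div hB hcy.ne'
  have hN : HasDerivAt (fun z => 1 - Real.cos z / Real.cos (z / 2))
      (-((-Real.sin y * Real.cos (y / 2) - Real.cos y * (-Real.sin (y / 2) * (1 / 2)))
        / Real.cos (y / 2) ^ 2)) y := by
    exact hA.const_sub 1
  have hf := hN.fun_div (hasDerivAt_pow 2 y) (by positivity : (y:ℝ) ^ 2 ≠ 0)
  refine hf.congr_deriv ?_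
  have hsiny : Real.sin y = 2 * Real.sin (y / 2) * Real.cos (y / 2) := by
    rw [← Real.sin_two_mul]; ring_nf
  have hcosy : Real.cos y = 2 * Real.cos (y / 2) ^ 2 - 1 := by
    have := Real.cos_sq (y / 2)
    have h2 : 2 * (y / 2) = y := by ring
    rw [h2] at this
    linarith
  have hcy' := hcy.ne'
  have hy' := hy0.ne'
  field_simp
  rw [hsiny, hcosy]
  ring

lemma sandor_mono : MonotoneOn (fun z => (1 - Real.cos z / Real.cos (z / 2)) / z ^ 2) (Ioo 0 π) := by
  have hint : interior (Ioo (0:ℝ) π) = Ioo 0 π := interior_Ioo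
  apply monotoneOn_of_deriv_nonneg (convex_Ioo 0 π)
  · intro y hy
    exact (sandor_deriv hy).differentiableAt.continuousAt.continuousWithinAt
  · rw [hint]
    intro y hy
    exact (sandor_deriv hy).differentiableAt.differentiableWithinAt
  · rw [hint]
    intro y hy
    rw [(sandor_deriv hy).deriv]
    obtain ⟨hy0, hy1⟩ := hy
    have ht0 : 0 < y / 2 := by linarith
    have ht2 : y / 2 < π / 2 := by linarith
    have hkey := key_ineq ht0 ht2
    have hcy : 0 < Real.cos (y / 2) :=
      Real.cos_pos_of_mem_Ioo ⟨by linarith [pi_pos], by linarith⟩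
    apply div_nonneg _ (by positivity)
    apply mul_nonneg hy0.le
    linarith

theorem sandor_first_endpoint (c : ℝ) (hc : c ∈ Ioo 0 π) (x : ℝ) (hx : x ∈ Ioo 0 c) :
    3 / 8 ≤ (1 - Real.cos x / Real.cos (x / 2)) / x ^ 2 ∧
    (1 - Real.cos x / Real.cos (x / 2)) / x ^ 2 ≤ (1 - Real.cos c / Real.cos (c / 2)) / c ^ 2 := by
  obtain ⟨hc0, hc1⟩ := hc
  obtain ⟨hx0, hx1⟩ := hx
  have hxio : x ∈ Ioo 0 π := ⟨hx0, by linarith⟩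
  constructor
  · have ht0 : 0 < x / 2 := by linarith
    have ht2 : x / 2 < π / 2 := by linarith
    have hcy : 0 < Real.cos (x / 2) :=
      Real.cos_pos_of_mem_Ioo ⟨by linarith [pi_pos], by linarith⟩
    have hcosx : Real.cos x = 2 * Real.cos (x / 2) ^ 2 - 1 := by
      have := Real.cos_sq (x / 2)
      have h2 : 2 * (x / 2) = x := by ring
      rw [h2] at this
      linarith
    have hkey := low_ineq ht0 ht2
    rw [le_div_iff₀ (by positivity : (0:ℝ) < x ^ 2), hcosx]
    have hexp : 1 - (2 * Real.cos (x / 2) ^ 2 - 1) / Real.cos (x / 2)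
        = (1 - Real.cos (x / 2)) * (2 * Real.cos (x / 2) + 1) / Real.cos (x / 2) := by
      field_simp; ring
    rw [hexp, le_div_iff₀ hcy]
    nlinarith
  · exact sandor_mono hxio ⟨hc0, hc1⟩ hx1.le
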